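/- For 0 < m < M and p ≥ 1, the generalized Kantorovich constant satisfies K(m,M,p) ≤ (M/m)^{p−1}, where K(m,M,p) = ((p−1)^{p−1}/p^p) · (M^p − m^p)^p / ((M−m)(mM^p − Mm^p)^{p−1}). -/

import Mathlib

/-- The generalized Kantorovich (Ky Fan–Furuta) constant
`K(m,M,p) = ((p-1)^{p-1}/p^p) · (M^p - m^p)^p / ((M-m)(m M^p - M m^p)^{p-1})`. -/
noncomputable def kantorovichConst (m M p : ℝ) : ℝ :=
  ((p - 1) ^ (p - 1) / p ^ p) * (M ^ p - m ^ p) ^ p /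
    ((M - m) * (m * M ^ p - M * m ^ p) ^ (p - 1))

/-- For `0 < m < M` and `p ≥ 1`, the generalized Kantorovich constant satisfies
`K(m,M,p) ≤ (M/m)^{p-1}`. -/
theorem kantorovichConst_le (m M p : ℝ) (hm : 0 < m) (hmM : m < M) (hp : 1 ≤ p) :
    kantorovichConst m M p ≤ (M / m) ^ (p - 1) := by
  rcases eq_or_lt_of_le hp with rfl | hp1
  · -- case p = 1
    have hMm : M - m ≠ 0 := by linarith
    simp only [kantorovichConst, sub_self, Real.rpow_zero, Real.rpow_one, mul_one,
      div_one, one_mul]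
    rw [div_self hMm]
  · -- case 1 < p
    unfold kantorovichConst
    have hM : 0 < M := hm.trans hmM
    have hq : 0 < p - 1 := by linarith
    have hp0 : 0 < p := by linarith
    have hXW : M ^ p = M ^ (p - 1) * M := by
      have h := Real.rpow_add hM (p - 1) 1
      rw [sub_add_cancel, Real.rpow_one] at h; exact h
    have hYV : m ^ p = m ^ (p - 1) * m := by
      have h := Real.rpow_add hm (p - 1) 1
      rw [sub_add_cancel, Real.rpow_one] at h; exact h
    -- Bernoulli with u = m/M gives (A)
    have b1 : 1 + p * (m / M - 1) ≤ (m / M) ^ p := by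
      have := one_add_mul_self_le_rpow_one_add (s := m / M - 1)
        (by nlinarith [div_nonneg hm.le hM.le]) hp1.le
      simpa using this
    have hA : M ^ p - m ^ p ≤ p * M ^ (p - 1) * (M - m) := by
      have h := mul_le_mul_of_nonneg_right b1 (Real.rpow_pos_of_pos hM p).le
      rw [Real.div_rpow hm.le hM.le, div_mul_cancel₀ _ (Real.rpow_pos_of_pos hM p).ne'] at h
      have hL : (1 + p * (m / M - 1)) * M ^ p
          = M ^ p + p * (m - M) * M ^ (p - 1) := by
        rw [hXW]; field_simp
      rw [hL] at h
      nlinarith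
    -- Bernoulli with u = M/m gives (B)
    have b2 : 1 + p * (M / m - 1) ≤ (M / m) ^ p := by
      have := one_add_mul_self_le_rpow_one_add (s := M / m - 1)
        (by nlinarith [div_nonneg hM.le hm.le]) hp1.le
      simpa using this
    have hB : (p - 1) * (M ^ p - m ^ p) ≤ p * M * (M ^ (p - 1) - m ^ (p - 1)) := by
      have h := mul_le_mul_of_nonneg_right b2 (Real.rpow_pos_of_pos hm p).le
      rw [Real.div_rpow hM.le hm.le, div_mul_cancel₀ _ (Real.rpow_pos_of_pos hm p).ne'] at h
      have hL : (1 + p * (M / m - 1)) * m ^ p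
          = m ^ p + p * (M - m) * m ^ (p - 1) := by
        rw [hYV]; field_simp
      rw [hL] at h
      nlinarith [hXW, hYV]
    -- main assembly
    have ha : 0 < M ^ p - m ^ p := by
      have := Real.rpow_lt_rpow hm.le hmM hp0
      linarith
    have hE : 0 < M ^ (p - 1) - m ^ (p - 1) := by
      have := Real.rpow_lt_rpow hm.le hmM hq
      linarith
    set a := M ^ p - m ^ p with hadef
    set E := M ^ (p - 1) - m ^ (p - 1) with hEdef
    have hD : m * M ^ p - M * m ^ p = m * M * E := by
      rw [hXW, hYV, hEdef]; ring
    rw [hD]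
    have hDpos : 0 < m * M * E := by positivity
    have hden : 0 < (M - m) * (m * M * E) ^ (p - 1) := by
      have := Real.rpow_pos_of_pos hDpos (p - 1)
      nlinarith
    rw [div_le_iff₀ hden, div_mul_eq_mul_div, div_le_iff₀ (Real.rpow_pos_of_pos hp0 p)]
    have hap : a ^ p = a ^ (p - 1) * a := by
      have h := Real.rpow_add ha (p - 1) 1
      rw [sub_add_cancel, Real.rpow_one] at h; exact h
    have hpp : p ^ p = p ^ (p - 1) * p := by
      have h := Real.rpow_add hp0 (p - 1) 1
      rw [sub_add_cancel, Real.rpow_one] at h; exact h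
    have hmul : (m * M * E) ^ (p - 1) = m ^ (p - 1) * (M ^ (p - 1) * E ^ (p - 1)) := by
      rw [Real.mul_rpow (by positivity) hE.le, Real.mul_rpow hm.le hM.le, mul_assoc]
    have hQ : (M / m) ^ (p - 1) * m ^ (p - 1) = M ^ (p - 1) := by
      rw [← Real.mul_rpow (by positivity) hm.le, div_mul_cancel₀ _ hm.ne']
    have h1 : (p - 1) ^ (p - 1) * a ^ (p - 1)
        ≤ p ^ (p - 1) * (M ^ (p - 1) * E ^ (p - 1)) := by
      have h := Real.rpow_le_rpow (by positivity) hB hq.le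
      rw [Real.mul_rpow hq.le ha.le, Real.mul_rpow (by positivity) hE.le,
        Real.mul_rpow hp0.le hM.le] at h
      calc (p - 1) ^ (p - 1) * a ^ (p - 1) ≤ p ^ (p-1) * M ^ (p-1) * E ^ (p-1) := h
        _ = p ^ (p - 1) * (M ^ (p - 1) * E ^ (p - 1)) := by ring
    calc (p - 1) ^ (p - 1) * a ^ p
        = ((p - 1) ^ (p - 1) * a ^ (p - 1)) * a := by rw [hap]; ring
      _ ≤ (p ^ (p - 1) * (M ^ (p - 1) * E ^ (p - 1))) * (p * M ^ (p - 1) * (M - m)) :=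
          mul_le_mul h1 hA ha.le (by positivity)
      _ = ((M / m) ^ (p - 1) * m ^ (p - 1)) * M ^ (p - 1) * E ^ (p - 1) * (M - m)
          * (p ^ (p - 1) * p) := by rw [hQ]; ring
      _ = (M / m) ^ (p - 1) * ((M - m) * (m * M * E) ^ (p - 1)) * p ^ p := by
          rw [hmul, hpp]; ring
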